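/- For all R1, R2 ∈ ℛ: J_{R1}(π) = J_{R2}(π) for every policy π if and only if there exists Φ : S → ℝ with ∑_{s∈S} ι(s)·Φ(s) = 0 such that for all (s,a) ∈ S×A, ∑_{s'∈S} τ(s,a)(s')·R2(s,a,s') = ∑_{s'∈S} τ(s,a)(s')·(R1(s,a,s') + γ·Φ(s')) − Φ(s). -/

import Mathlib

open scoped BigOperators

/-- A probability vector on a finite type. -/
def IsProbVec {X : Type} [Fintype X] (p : X → ℝ) : Prop :=
  (∀ x, 0 ≤ p x) ∧ ∑ x, p x = 1

/-- A (stationary) policy: a probability vector over actions for each state. -/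
def Policy (S A : Type) [Fintype A] : Type :=
  {p : S → A → ℝ // ∀ s, IsProbVec (p s)}

/-- The transition matrix `P_π` induced by a policy `π` under transition function `τ`. -/
noncomputable def Pmat {S A : Type} [Fintype S] [Fintype A]
    (τ : S → A → S → ℝ) (π : Policy S A) : Matrix S S ℝ :=
  Matrix.of fun s s' => ∑ a, π.1 s a * τ s a s'

/-- The state distribution `ι P_π^t` at time `t`. -/
noncomputable def stateDist {S A : Type} [Fintype S] [DecidableEq S] [Fintype A]
    (τ : S → A → S → ℝ) (ι : S → ℝ) (π : Policy S A) (t : ℕ) : S → ℝ :=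
  Matrix.vecMul ι (Pmat τ π ^ t)

/-- The expected one-step reward `r_{R,π}`. -/
noncomputable def rvec {S A : Type} [Fintype S] [Fintype A]
    (τ : S → A → S → ℝ) (R : S → A → S → ℝ) (π : Policy S A) (s : S) : ℝ :=
  ∑ a, π.1 s a * ∑ s', τ s a s' * R s a s'

/-- The policy evaluation function `J_R(π)`. -/
noncomputable def Jval {S A : Type} [Fintype S] [DecidableEq S] [Fintype A]
    (τ : S → A → S → ℝ) (ι : S → ℝ) (γ : ℝ) (R : S → A → S → ℝ)
    (π : Policy S A) : ℝ :=
  ∑' t : ℕ, γ ^ t * ∑ s, stateDist τ ι π t s * rvec τ R π s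

/-- Every state is reachable under `τ` and `ι`. -/
def AllReachable {S A : Type} [Fintype S] [DecidableEq S] [Fintype A]
    (τ : S → A → S → ℝ) (ι : S → ℝ) : Prop :=
  ∀ s : S, ∃ (π : Policy S A) (t : ℕ), 0 < stateDist τ ι π t s

/-- `π` is an optimal policy for `R`. -/
def IsOptimal {S A : Type} [Fintype S] [DecidableEq S] [Fintype A]
    (τ : S → A → S → ℝ) (ι : S → ℝ) (γ : ℝ) (R : S → A → S → ℝ)
    (π : Policy S A) : Prop :=
  ∀ π' : Policy S A, Jval τ ι γ R π' ≤ Jval τ ι γ R π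

/-- `R₁ ≡_OPT R₂`: the same policies are optimal for `R₁` and `R₂`. -/
def EquivOPT {S A : Type} [Fintype S] [DecidableEq S] [Fintype A]
    (τ : S → A → S → ℝ) (ι : S → ℝ) (γ : ℝ) (R₁ R₂ : S → A → S → ℝ) : Prop :=
  ∀ π : Policy S A, IsOptimal τ ι γ R₁ π ↔ IsOptimal τ ι γ R₂ π

/-- `R₁ ≡_ORD R₂`: `R₁` and `R₂` induce the same ordering of policies. -/
def EquivORD {S A : Type} [Fintype S] [DecidableEq S] [Fintype A]
    (τ : S → A → S → ℝ) (ι : S → ℝ) (γ : ℝ) (R₁ R₂ : S → A → S → ℝ) : Prop :=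
  ∀ π π' : Policy S A,
    (Jval τ ι γ R₁ π' < Jval τ ι γ R₁ π ↔ Jval τ ι γ R₂ π' < Jval τ ι γ R₂ π)

/-- `f` is `P`-admissible: `f R₁ = f R₂` implies `P R₁ R₂`. -/
def PAdmissible {R : Type*} {X : Type*} (P : R → R → Prop) (f : R → X) : Prop :=
  ∀ R₁ R₂ : R, f R₁ = f R₂ → P R₁ R₂

/-- `f` is `P`-robust to misspecification with `g`. -/
def PRobust {R : Type*} {X : Type*} (P : R → R → Prop) (f g : R → X) : Prop :=
  PAdmissible P f ∧ f ≠ g ∧ Set.range g ⊆ Set.range f ∧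
    ∀ R₁ R₂ : R, f R₁ = g R₂ → P R₁ R₂

section Aux
open Matrix
variable {S A : Type} [Fintype S] [DecidableEq S] [Fintype A]

def RowStoch (M : Matrix S S ℝ) : Prop :=
  (∀ s s', 0 ≤ M s s') ∧ ∀ s, ∑ s', M s s' = 1

lemma rowStoch_one : RowStoch (1 : Matrix S S ℝ) := by
  constructor
  · intro s s'; by_cases h : s = s' <;> simp [Matrix.one_apply, h]
  · intro s; simp [Matrix.one_apply]

lemma RowStoch.mul {M N : Matrix S S ℝ} (hM : RowStoch M) (hN : RowStoch N) :
    RowStoch (M * N) := by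
  constructor
  · intro s s'
    rw [Matrix.mul_apply]
    exact Finset.sum_nonneg fun z _ => mul_nonneg (hM.1 s z) (hN.1 z s')
  · intro s
    simp only [Matrix.mul_apply]
    rw [Finset.sum_comm]
    calc ∑ z, ∑ s', M s z * N z s' = ∑ z, M s z * ∑ s', N z s' := by
          simp [Finset.mul_sum]
      _ = 1 := by simp [hN.2, hM.2]

lemma RowStoch.pow {M : Matrix S S ℝ} (hM : RowStoch M) (t : ℕ) : RowStoch (M ^ t) := by
  induction t with
  | zero => simpa using rowStoch_one
  | succ n ih => rw [pow_succ]; exact ih.mul hM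

lemma RowStoch.mulVec_bound {M : Matrix S S ℝ} (hM : RowStoch M) {c : S → ℝ} {B : ℝ}
    (hc : ∀ x, |c x| ≤ B) (s : S) : |(M *ᵥ c) s| ≤ B := by
  have h1 : |(M *ᵥ c) s| ≤ ∑ x, M s x * |c x| := by
    refine (Finset.abs_sum_le_sum_abs _ _).trans ?_
    refine Finset.sum_le_sum fun x _ => ?_
    rw [abs_mul, abs_of_nonneg (hM.1 s x)]
  refine h1.trans ?_
  calc ∑ x, M s x * |c x| ≤ ∑ x, M s x * B :=
        Finset.sum_le_sum fun x _ => mul_le_mul_of_nonneg_left (hc x) (hM.1 s x)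
    _ = B := by rw [← Finset.sum_mul, hM.2 s, one_mul]

lemma rowStoch_Pmat (τ : S → A → S → ℝ) (hτ : ∀ s a, IsProbVec (τ s a)) (π : Policy S A) :
    RowStoch (Pmat τ π) := by
  constructor
  · intro s s'
    exact Finset.sum_nonneg fun a _ => mul_nonneg ((π.2 s).1 a) ((hτ s a).1 s')
  · intro s
    show ∑ s', ∑ a, π.1 s a * τ s a s' = 1
    rw [Finset.sum_comm]
    calc ∑ a, ∑ s', π.1 s a * τ s a s' = ∑ a, π.1 s a * ∑ s', τ s a s' := by
          simp [Finset.mul_sum]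
      _ = 1 := by
          simp only [(fun a => (hτ s a).2 : ∀ a, ∑ s', τ s a s' = 1), mul_one]
          exact (π.2 s).2

end Aux

set_option linter.unusedSectionVars false
section Aux2
open Matrix
variable {S A : Type} [Fintype S] [DecidableEq S] [Fintype A]

lemma summable_geom_bound {γ : ℝ} (hγ0 : 0 ≤ γ) (hγ1 : γ < 1) (g : ℕ → ℝ) (M : ℝ)
    (h : ∀ t, |g t| ≤ M) : Summable fun t => γ ^ t * g t := by
  refine Summable.of_norm_bounded (g := fun t => M * γ ^ t) ?_ ?_
  · exact (summable_geometric_of_lt_one hγ0 hγ1).mul_left M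
  · intro t
    rw [Real.norm_eq_abs, abs_mul, abs_of_nonneg (pow_nonneg hγ0 t), mul_comm]
    exact mul_le_mul_of_nonneg_right (h t) (pow_nonneg hγ0 t)

lemma bound_of_abs (c : S → ℝ) (x : S) : |c x| ≤ ∑ y, |c y| :=
  Finset.single_le_sum (fun y _ => abs_nonneg (c y)) (Finset.mem_univ x)

noncomputable def Vfun (τ : S → A → S → ℝ) (γ : ℝ) (π : Policy S A) (c : S → ℝ) (s : S) : ℝ :=
  ∑' t : ℕ, γ ^ t * ((Pmat τ π ^ t) *ᵥ c) s

variable {τ : S → A → S → ℝ} {ι : S → ℝ} {γ : ℝ}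

lemma summable_V (hτ : ∀ s a, IsProbVec (τ s a)) (hγ0 : 0 ≤ γ) (hγ1 : γ < 1)
    (π : Policy S A) (c : S → ℝ) (s : S) :
    Summable fun t : ℕ => γ ^ t * ((Pmat τ π ^ t) *ᵥ c) s := by
  refine summable_geom_bound hγ0 hγ1 _ (∑ y, |c y|) fun t => ?_
  exact ((rowStoch_Pmat τ hτ π).pow t).mulVec_bound (bound_of_abs c) s

lemma stateDist_nonneg (hτ : ∀ s a, IsProbVec (τ s a)) (hι : IsProbVec ι)
    (π : Policy S A) (t : ℕ) (s : S) : 0 ≤ stateDist τ ι π t s := by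
  refine Finset.sum_nonneg fun x _ => mul_nonneg (hι.1 x) ?_
  exact ((rowStoch_Pmat τ hτ π).pow t).1 x s

lemma stateDist_sum (hτ : ∀ s a, IsProbVec (τ s a)) (hι : IsProbVec ι)
    (π : Policy S A) (t : ℕ) : ∑ s, stateDist τ ι π t s = 1 := by
  show ∑ s, ∑ x, ι x * (Pmat τ π ^ t) x s = 1
  rw [Finset.sum_comm]
  calc ∑ x, ∑ s, ι x * (Pmat τ π ^ t) x s = ∑ x, ι x * ∑ s, (Pmat τ π ^ t) x s := by
        simp [Finset.mul_sum]
    _ = 1 := by simp [((rowStoch_Pmat τ hτ π).pow _).2, hι.2]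

lemma stateDist_pair_bound (hτ : ∀ s a, IsProbVec (τ s a)) (hι : IsProbVec ι)
    (π : Policy S A) (c : S → ℝ) (t : ℕ) :
    |∑ s, stateDist τ ι π t s * c s| ≤ ∑ y, |c y| := by
  refine (Finset.abs_sum_le_sum_abs _ _).trans ?_
  calc ∑ s, |stateDist τ ι π t s * c s|
      = ∑ s, stateDist τ ι π t s * |c s| := by
        refine Finset.sum_congr rfl fun s _ => ?_
        rw [abs_mul, abs_of_nonneg (stateDist_nonneg hτ hι π t s)]
    _ ≤ ∑ s, stateDist τ ι π t s * (∑ y, |c y|) :=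
        Finset.sum_le_sum fun s _ => mul_le_mul_of_nonneg_left (bound_of_abs c s)
          (stateDist_nonneg hτ hι π t s)
    _ = ∑ y, |c y| := by rw [← Finset.sum_mul, stateDist_sum hτ hι π t, one_mul]

lemma summable_Jterm (hτ : ∀ s a, IsProbVec (τ s a)) (hι : IsProbVec ι)
    (hγ0 : 0 ≤ γ) (hγ1 : γ < 1) (π : Policy S A) (c : S → ℝ) :
    Summable fun t : ℕ => γ ^ t * ∑ s, stateDist τ ι π t s * c s :=
  summable_geom_bound hγ0 hγ1 _ (∑ y, |c y|) (stateDist_pair_bound hτ hι π c)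

/-- Bellman equation for `Vfun`. -/
lemma Vfun_bellman (hτ : ∀ s a, IsProbVec (τ s a)) (hγ0 : 0 ≤ γ) (hγ1 : γ < 1)
    (π : Policy S A) (c : S → ℝ) (s : S) :
    Vfun τ γ π c s = c s + γ * (Pmat τ π *ᵥ (Vfun τ γ π c)) s := by
  have hsum := summable_V hτ hγ0 hγ1 π c s
  have h0 : Vfun τ γ π c s
      = γ ^ 0 * ((Pmat τ π ^ 0) *ᵥ c) s
        + ∑' t : ℕ, γ ^ (t+1) * ((Pmat τ π ^ (t+1)) *ᵥ c) s := by
    exact Summable.tsum_eq_zero_add hsum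
  rw [h0]
  simp only [pow_zero, one_mul, Matrix.one_mulVec]
  congr 1
  have hrw : ∀ t : ℕ, γ ^ (t+1) * ((Pmat τ π ^ (t+1)) *ᵥ c) s
      = ∑ x, Pmat τ π s x * (γ * (γ ^ t * ((Pmat τ π ^ t) *ᵥ c) x)) := by
    intro t
    have hp : Pmat τ π ^ (t+1) *ᵥ c = Pmat τ π *ᵥ ((Pmat τ π ^ t) *ᵥ c) := by
      rw [pow_succ', Matrix.mulVec_mulVec]
    rw [hp]
    show γ ^ (t+1) * ∑ x, Pmat τ π s x * ((Pmat τ π ^ t) *ᵥ c) x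
      = ∑ x, Pmat τ π s x * (γ * (γ ^ t * ((Pmat τ π ^ t) *ᵥ c) x))
    rw [Finset.mul_sum]
    refine Finset.sum_congr rfl fun x _ => ?_
    ring
  calc (∑' t : ℕ, γ ^ (t+1) * ((Pmat τ π ^ (t+1)) *ᵥ c) s)
      = ∑' t : ℕ, ∑ x, Pmat τ π s x * (γ * (γ ^ t * ((Pmat τ π ^ t) *ᵥ c) x)) := by
        exact tsum_congr hrw
    _ = ∑ x, ∑' t : ℕ, Pmat τ π s x * (γ * (γ ^ t * ((Pmat τ π ^ t) *ᵥ c) x)) := by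
        refine Summable.tsum_finsetSum fun x _ => ?_
        exact ((summable_V hτ hγ0 hγ1 π c x).mul_left γ).mul_left _
    _ = γ * (Pmat τ π *ᵥ (Vfun τ γ π c)) s := by
        show _ = γ * ∑ x, Pmat τ π s x * Vfun τ γ π c x
        rw [Finset.mul_sum]
        refine Finset.sum_congr rfl fun x _ => ?_
        rw [tsum_mul_left, tsum_mul_left]
        unfold Vfun
        ring

/-- Pairing: `ι · Vfun = ∑' γ^t (stateDist · c)`. -/
lemma Vfun_pairing (hτ : ∀ s a, IsProbVec (τ s a)) (hγ0 : 0 ≤ γ) (hγ1 : γ < 1)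
    (π : Policy S A) (c : S → ℝ) :
    ∑ s, ι s * Vfun τ γ π c s = ∑' t : ℕ, γ ^ t * ∑ s, stateDist τ ι π t s * c s := by
  calc ∑ s, ι s * Vfun τ γ π c s
      = ∑ s, ∑' t : ℕ, ι s * (γ ^ t * ((Pmat τ π ^ t) *ᵥ c) s) := by
        refine Finset.sum_congr rfl fun s _ => ?_
        rw [tsum_mul_left]; rfl
    _ = ∑' t : ℕ, ∑ s, ι s * (γ ^ t * ((Pmat τ π ^ t) *ᵥ c) s) := by
        rw [Summable.tsum_finsetSum]
        intro s _
        exact (summable_V hτ hγ0 hγ1 π c s).mul_left (ι s)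
    _ = ∑' t : ℕ, γ ^ t * ∑ s, stateDist τ ι π t s * c s := by
        refine tsum_congr fun t => ?_
        have : ∑ s, ι s * (γ ^ t * ((Pmat τ π ^ t) *ᵥ c) s)
            = γ ^ t * ∑ s, ι s * ((Pmat τ π ^ t) *ᵥ c) s := by
          rw [Finset.mul_sum]; exact Finset.sum_congr rfl fun s _ => by ring
        rw [this]
        congr 1
        have hd : ∑ s, ι s * ((Pmat τ π ^ t) *ᵥ c) s = ι ⬝ᵥ ((Pmat τ π ^ t) *ᵥ c) := rfl
        rw [hd, Matrix.dotProduct_mulVec]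
        rfl

/-- Uniqueness of bounded solutions of the Bellman equation. -/
lemma bellman_unique [Nonempty S] {M : Matrix S S ℝ} (hM : RowStoch M)
    (hγ0 : 0 ≤ γ) (hγ1 : γ < 1) {c x y : S → ℝ}
    (hx : ∀ s, x s = c s + γ * (M *ᵥ x) s) (hy : ∀ s, y s = c s + γ * (M *ᵥ y) s) :
    x = y := by
  set z : S → ℝ := fun s => x s - y s with hz
  have hzeq : ∀ s, z s = γ * (M *ᵥ z) s := by
    intro s
    have : (M *ᵥ z) s = (M *ᵥ x) s - (M *ᵥ y) s := by
      show ∑ u, M s u * (x u - y u) = _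
      simp [Matrix.mulVec, dotProduct, mul_sub, Finset.sum_sub_distrib]
    rw [this]; simp only [hz, hx s, hy s]
    ring
  obtain ⟨s₀, _, hs₀⟩ := Finset.exists_max_image Finset.univ (fun s => |z s|)
    ⟨Classical.arbitrary S, Finset.mem_univ _⟩
  have hb : |z s₀| ≤ γ * |z s₀| := by
    have h1 : |(M *ᵥ z) s₀| ≤ |z s₀| :=
      hM.mulVec_bound (fun u => hs₀ u (Finset.mem_univ u)) s₀
    calc |z s₀| = γ * |(M *ᵥ z) s₀| := by
          rw [hzeq s₀, abs_mul, abs_of_nonneg hγ0]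
      _ ≤ γ * |z s₀| := mul_le_mul_of_nonneg_left h1 hγ0
  have hz0 : |z s₀| = 0 := by nlinarith [abs_nonneg (z s₀)]
  funext s
  have : |z s| ≤ 0 := by
    have := hs₀ s (Finset.mem_univ s)
    linarith [this, hz0.le]
  have : z s = 0 := abs_nonpos_iff.mp this
  simpa [hz, sub_eq_zero] using this

end Aux2

section Aux3
open Matrix
variable {S A : Type} [Fintype S] [DecidableEq S] [Fintype A]

lemma pow_entry_ge {M N : Matrix S S ℝ} (hM : RowStoch M) (hN : RowStoch N)
    {c : ℝ} (hc : 0 ≤ c) (h : ∀ s s', c * N s s' ≤ M s s') (t : ℕ) :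
    ∀ s s', c ^ t * (N ^ t) s s' ≤ (M ^ t) s s' := by
  induction t with
  | zero => intro s s'; simp
  | succ n ih =>
    intro s s'
    simp only [pow_succ, Matrix.mul_apply, Finset.mul_sum]
    refine Finset.sum_le_sum fun z _ => ?_
    have h1 : c ^ n * (N ^ n) s z ≤ (M ^ n) s z := ih s z
    have h2 : c * N z s' ≤ M z s' := h z s'
    have hn1 : 0 ≤ c ^ n * (N ^ n) s z := mul_nonneg (pow_nonneg hc n) ((hN.pow n).1 s z)
    have hn2 : 0 ≤ c * N z s' := mul_nonneg hc (hN.1 z s')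
    calc c ^ n * c * ((N ^ n) s z * N z s')
        = (c ^ n * (N ^ n) s z) * (c * N z s') := by ring
      _ ≤ (M ^ n) s z * M z s' :=
          mul_le_mul h1 h2 hn2 (le_trans hn1 h1)

variable {τ : S → A → S → ℝ} {ι : S → ℝ}

lemma stateDist_le_of_le (hτ : ∀ s a, IsProbVec (τ s a)) (hι : IsProbVec ι)
    {π π' : Policy S A} {c : ℝ} (hc : 0 ≤ c)
    (h : ∀ x b, c * π.1 x b ≤ π'.1 x b) (t : ℕ) (s : S) :
    c ^ t * stateDist τ ι π t s ≤ stateDist τ ι π' t s := by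
  have hP : ∀ x y, c * Pmat τ π x y ≤ Pmat τ π' x y := by
    intro x y
    show c * ∑ a, π.1 x a * τ x a y ≤ ∑ a, π'.1 x a * τ x a y
    rw [Finset.mul_sum]
    refine Finset.sum_le_sum fun a _ => ?_
    rw [← mul_assoc]
    exact mul_le_mul_of_nonneg_right (h x a) ((hτ x a).1 y)
  have hPP := pow_entry_ge (rowStoch_Pmat τ hτ π') (rowStoch_Pmat τ hτ π) hc hP t
  show c ^ t * ∑ x, ι x * (Pmat τ π ^ t) x s ≤ ∑ x, ι x * (Pmat τ π' ^ t) x s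
  rw [Finset.mul_sum]
  refine Finset.sum_le_sum fun x _ => ?_
  calc c ^ t * (ι x * (Pmat τ π ^ t) x s) = ι x * (c ^ t * (Pmat τ π ^ t) x s) := by ring
    _ ≤ ι x * (Pmat τ π' ^ t) x s :=
        mul_le_mul_of_nonneg_left (hPP x s) (hι.1 x)

/-- Uniform mixture of a finite family of policies. -/
noncomputable def mixAll [Nonempty S] (f : S → Policy S A) : Policy S A :=
  ⟨fun x b => (∑ s, (f s).1 x b) / (Fintype.card S : ℝ), by
    intro x
    constructor
    · intro b
      exact div_nonneg (Finset.sum_nonneg fun s _ => ((f s).2 x).1 b)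
        (Nat.cast_nonneg _)
    · rw [← Finset.sum_div, Finset.sum_comm]
      have : ∀ s : S, ∑ b, (f s).1 x b = 1 := fun s => ((f s).2 x).2
      simp only [this, Finset.sum_const, nsmul_eq_mul, mul_one, Finset.card_univ]
      rw [div_self]
      exact_mod_cast Fintype.card_ne_zero⟩

lemma mixAll_ge [Nonempty S] (f : S → Policy S A) (s : S) (x : S) (b : A) :
    (1 / (Fintype.card S : ℝ)) * (f s).1 x b ≤ (mixAll f).1 x b := by
  have hcard : (0:ℝ) < Fintype.card S := by
    exact_mod_cast Fintype.card_pos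
  show _ ≤ (∑ s', (f s').1 x b) / (Fintype.card S : ℝ)
  have hle : (f s).1 x b ≤ ∑ s', (f s').1 x b :=
    Finset.single_le_sum (fun s' _ => ((f s').2 x).1 b) (Finset.mem_univ s)
  calc (1 / (Fintype.card S : ℝ)) * (f s).1 x b = (f s).1 x b / (Fintype.card S : ℝ) := by
        ring
    _ ≤ (∑ s', (f s').1 x b) / (Fintype.card S : ℝ) := by
        exact (div_le_div_iff_of_pos_right hcard).mpr hle

/-- Perturbation of a policy at one state toward one action (half mix). -/
noncomputable def perturb [DecidableEq A] (π : Policy S A) (s : S) (a : A) : Policy S A :=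
  ⟨fun x b => if x = s then (π.1 s b + (if b = a then 1 else 0)) / 2 else π.1 x b, by
    intro x
    by_cases hx : x = s
    · constructor
      · intro b
        dsimp only
        rw [if_pos hx]
        have h1 := (π.2 s).1 b
        have h2 : (0:ℝ) ≤ if b = a then (1:ℝ) else 0 := by positivity
        linarith
      · simp only [if_pos hx]
        rw [← Finset.sum_div, Finset.sum_add_distrib, (π.2 s).2,
          Finset.sum_ite_eq' Finset.univ a (fun _ => (1:ℝ))]
        simp
    · constructor
      · intro b; dsimp only; rw [if_neg hx]; exact (π.2 x).1 b
      · simp only [if_neg hx]; exact (π.2 x).2⟩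

lemma perturb_ge [DecidableEq A] (π : Policy S A) (s : S) (a : A) (x : S) (b : A) :
    (1 / 2 : ℝ) * π.1 x b ≤ (perturb π s a).1 x b := by
  show _ ≤ if x = s then (π.1 s b + (if b = a then 1 else 0)) / 2 else π.1 x b
  by_cases hx : x = s
  · subst hx
    rw [if_pos rfl]
    have h1 : (0:ℝ) ≤ if b = a then (1:ℝ) else 0 := by positivity
    linarith [(π.2 x).1 b]
  · rw [if_neg hx]
    linarith [(π.2 x).1 b]

end Aux3


open Matrix

theorem stmt_8 {S A : Type} [Fintype S] [DecidableEq S] [Fintype A]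
    [Nonempty S] [Nonempty A]
    (τ : S → A → S → ℝ) (hτ : ∀ s a, IsProbVec (τ s a))
    (ι : S → ℝ) (hι : IsProbVec ι)
    (γ : ℝ) (hγ0 : 0 < γ) (hγ1 : γ < 1)
    (hreach : AllReachable τ ι)
    (R₁ R₂ : S → A → S → ℝ) :
    (∀ π : Policy S A, Jval τ ι γ R₁ π = Jval τ ι γ R₂ π) ↔
      ∃ Φ : S → ℝ, (∑ s, ι s * Φ s = 0) ∧ ∀ s a,
        ∑ s', τ s a s' * R₂ s a s' =
          (∑ s', τ s a s' * (R₁ s a s' + γ * Φ s')) - Φ s := by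
  constructor
  · -- forward direction
    intro hJ
    classical
    set D : S → A → ℝ :=
      fun s a => (∑ s', τ s a s' * R₂ s a s') - (∑ s', τ s a s' * R₁ s a s') with hD
    set RD : S → A → S → ℝ := fun s a _ => D s a with hRD
    have hτ1 : ∀ s a, ∑ s', τ s a s' = 1 := fun s a => (hτ s a).2
    have hwRD : ∀ (s : S) (a : A), ∑ s', τ s a s' * RD s a s' = D s a := by
      intro s a
      simp only [hRD]
      rw [← Finset.sum_mul, hτ1, one_mul]
    have hrvecD : ∀ (π : Policy S A) (s : S),
        rvec τ RD π s = rvec τ R₂ π s - rvec τ R₁ π s := by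
      intro π s
      unfold rvec
      rw [← Finset.sum_sub_distrib]
      refine Finset.sum_congr rfl fun a _ => ?_
      rw [hwRD s a]
      simp only [hD]
      ring
    have hJD : ∀ π : Policy S A, Jval τ ι γ RD π = 0 := by
      intro π
      have hsub : Jval τ ι γ RD π = Jval τ ι γ R₂ π - Jval τ ι γ R₁ π := by
        unfold Jval
        rw [← Summable.tsum_sub (summable_Jterm hτ hι hγ0.le hγ1 π _)
          (summable_Jterm hτ hι hγ0.le hγ1 π _)]
        refine tsum_congr fun t => ?_
        rw [← mul_sub, ← Finset.sum_sub_distrib]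
        congr 1
        refine Finset.sum_congr rfl fun s _ => ?_
        rw [hrvecD, mul_sub]
      rw [hsub, ← hJ π, sub_self]
    choose f tf hf using hreach
    have hreach₀ : ∀ s : S, ∃ t, 0 < stateDist τ ι (mixAll f) t s := by
      intro s
      refine ⟨tf s, ?_⟩
      have hcard : (0:ℝ) < Fintype.card S := by exact_mod_cast Fintype.card_pos
      have hle := stateDist_le_of_le hτ hι (c := 1 / (Fintype.card S : ℝ))
        (by positivity) (fun x b => mixAll_ge f s x b) (tf s) s
      have hfs := hf s
      have hpos : 0 < (1 / (Fintype.card S : ℝ)) ^ tf s * stateDist τ ι (f s) (tf s) s := by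
        positivity
      exact lt_of_lt_of_le hpos hle
    set π₀ : Policy S A := mixAll f with hπ₀
    set V : S → ℝ := Vfun τ γ π₀ (rvec τ RD π₀) with hV
    have hVBell : ∀ x, V x = rvec τ RD π₀ x + γ * (Pmat τ π₀ *ᵥ V) x :=
      fun x => Vfun_bellman hτ hγ0.le hγ1 π₀ _ x
    have hVι : ∑ s, ι s * V s = 0 := by
      rw [hV, Vfun_pairing hτ hγ0.le hγ1]
      have h := hJD π₀
      unfold Jval at h
      exact h
    have hAdv : ∀ (s : S) (a : A),
        D s a + γ * (∑ s', τ s a s' * V s') - V s = 0 := by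
      intro s a
      set π' : Policy S A := perturb π₀ s a with hπ'
      set u : S → ℝ := fun x => rvec τ RD π' x + γ * (Pmat τ π' *ᵥ V) x - V x with hu
      have hπ'x : ∀ x, x ≠ s → π'.1 x = π₀.1 x := by
        intro x hx
        funext b
        show (if x = s then (π₀.1 s b + (if b = a then 1 else 0)) / 2 else π₀.1 x b) = π₀.1 x b
        rw [if_neg hx]
      have hπ's : ∀ b, π'.1 s b = (π₀.1 s b + (if b = a then 1 else 0)) / 2 := by
        intro b
        show (if s = s then (π₀.1 s b + (if b = a then 1 else 0)) / 2 else π₀.1 s b) = _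
        rw [if_pos rfl]
      have hu_off : ∀ x, x ≠ s → u x = 0 := by
        intro x hx
        have h1 : rvec τ RD π' x = rvec τ RD π₀ x := by
          unfold rvec
          rw [hπ'x x hx]
        have h2 : (Pmat τ π' *ᵥ V) x = (Pmat τ π₀ *ᵥ V) x := by
          show ∑ y, Pmat τ π' x y * V y = ∑ y, Pmat τ π₀ x y * V y
          refine Finset.sum_congr rfl fun y _ => ?_
          show (∑ b, π'.1 x b * τ x b y) * V y = (∑ b, π₀.1 x b * τ x b y) * V y
          rw [hπ'x x hx]
        simp only [hu]
        rw [h1, h2]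
        linarith [hVBell x]
      have hrvπ₀ : rvec τ RD π₀ s = ∑ b, π₀.1 s b * D s b := by
        unfold rvec
        exact Finset.sum_congr rfl fun b _ => by rw [hwRD s b]
      have hr : rvec τ RD π' s = (rvec τ RD π₀ s + D s a) / 2 := by
        unfold rvec
        calc ∑ b, π'.1 s b * ∑ s', τ s b s' * RD s b s'
            = ∑ b, ((π₀.1 s b * D s b) / 2 + (if b = a then D s b else 0) / 2) := by
              refine Finset.sum_congr rfl fun b _ => ?_
              rw [hwRD s b, hπ's b]
              by_cases hb : b = a <;> simp [hb] <;> ring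
          _ = (rvec τ RD π₀ s + D s a) / 2 := by
              rw [Finset.sum_add_distrib, ← Finset.sum_div, ← Finset.sum_div,
                Finset.sum_ite_eq' Finset.univ a (fun b => D s b), hrvπ₀]
              simp
              ring
      have hP : ∀ y, Pmat τ π' s y = (Pmat τ π₀ s y + τ s a y) / 2 := by
        intro y
        show ∑ b, π'.1 s b * τ s b y = _
        have hP₀ : Pmat τ π₀ s y = ∑ b, π₀.1 s b * τ s b y := rfl
        calc ∑ b, π'.1 s b * τ s b y
            = ∑ b, ((π₀.1 s b * τ s b y) / 2 + (if b = a then τ s b y else 0) / 2) := by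
              refine Finset.sum_congr rfl fun b _ => ?_
              rw [hπ's b]
              by_cases hb : b = a <;> simp [hb] <;> ring
          _ = (Pmat τ π₀ s y + τ s a y) / 2 := by
              rw [Finset.sum_add_distrib, ← Finset.sum_div, ← Finset.sum_div,
                Finset.sum_ite_eq' Finset.univ a (fun b => τ s b y), hP₀]
              simp
              ring
      have hPs : (Pmat τ π' *ᵥ V) s = ((Pmat τ π₀ *ᵥ V) s + ∑ s', τ s a s' * V s') / 2 := by
        have hPV₀ : (Pmat τ π₀ *ᵥ V) s = ∑ y, Pmat τ π₀ s y * V y := rfl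
        show ∑ y, Pmat τ π' s y * V y = _
        calc ∑ y, Pmat τ π' s y * V y
            = ∑ y, ((Pmat τ π₀ s y * V y) / 2 + (τ s a y * V y) / 2) := by
              refine Finset.sum_congr rfl fun y _ => ?_
              rw [hP y]
              ring
          _ = _ := by
              rw [Finset.sum_add_distrib, ← Finset.sum_div, ← Finset.sum_div, hPV₀]
              ring
      have hu_s : u s = (D s a + γ * (∑ s', τ s a s' * V s') - V s) / 2 := by
        simp only [hu]
        rw [hr, hPs]
        linarith [hVBell s]
      have hZBell : ∀ x, Vfun τ γ π' u x = u x + γ * (Pmat τ π' *ᵥ Vfun τ γ π' u) x :=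
        Vfun_bellman hτ hγ0.le hγ1 π' u
      have hWBell : ∀ x, Vfun τ γ π' (rvec τ RD π') x
          = rvec τ RD π' x + γ * (Pmat τ π' *ᵥ Vfun τ γ π' (rvec τ RD π')) x :=
        Vfun_bellman hτ hγ0.le hγ1 π' _
      set W : S → ℝ := fun x => Vfun τ γ π' (rvec τ RD π') x - V x with hW
      have hWeq : ∀ x, W x = u x + γ * (Pmat τ π' *ᵥ W) x := by
        intro x
        have hmv : (Pmat τ π' *ᵥ W) x
            = (Pmat τ π' *ᵥ Vfun τ γ π' (rvec τ RD π')) x - (Pmat τ π' *ᵥ V) x := by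
          show ∑ y, Pmat τ π' x y * W y
            = ∑ y, Pmat τ π' x y * Vfun τ γ π' (rvec τ RD π') y - ∑ y, Pmat τ π' x y * V y
          rw [← Finset.sum_sub_distrib]
          refine Finset.sum_congr rfl fun y _ => ?_
          simp only [hW]
          ring
        rw [hmv]; simp only [hW, hu]
        linarith [hWBell x]
      have hWZ : W = Vfun τ γ π' u :=
        bellman_unique (rowStoch_Pmat τ hτ π') hγ0.le hγ1 hWeq hZBell
      have hWι : ∑ x, ι x * W x = 0 := by
        have h1 : ∑ x, ι x * Vfun τ γ π' (rvec τ RD π') x = 0 := by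
          rw [Vfun_pairing hτ hγ0.le hγ1]
          have h := hJD π'
          unfold Jval at h
          exact h
        calc ∑ x, ι x * W x
            = ∑ x, (ι x * Vfun τ γ π' (rvec τ RD π') x - ι x * V x) := by
              refine Finset.sum_congr rfl fun x _ => ?_
              simp only [hW]
              ring
          _ = (∑ x, ι x * Vfun τ γ π' (rvec τ RD π') x) - ∑ x, ι x * V x :=
              Finset.sum_sub_distrib _ _
          _ = 0 := by rw [h1, hVι, sub_zero]
      have hZι : ∑ x, ι x * Vfun τ γ π' u x
          = ((D s a + γ * (∑ s', τ s a s' * V s') - V s) / 2)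
            * ∑' t : ℕ, γ ^ t * stateDist τ ι π' t s := by
        rw [Vfun_pairing hτ hγ0.le hγ1, ← tsum_mul_left]
        refine tsum_congr fun t => ?_
        have hsum_u : ∑ x, stateDist τ ι π' t x * u x = stateDist τ ι π' t s * u s := by
          refine Finset.sum_eq_single s (fun x _ hx => ?_) (fun h => absurd (Finset.mem_univ s) h)
          rw [hu_off x hx, mul_zero]
        rw [hsum_u, hu_s]
        ring
      have hCpos : 0 < ∑' t : ℕ, γ ^ t * stateDist τ ι π' t s := by
        obtain ⟨t₀, ht₀⟩ := hreach₀ s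
        have hsumm : Summable fun t : ℕ => γ ^ t * stateDist τ ι π' t s := by
          refine summable_geom_bound hγ0.le hγ1 _ 1 fun t => ?_
          rw [abs_of_nonneg (stateDist_nonneg hτ hι π' t s)]
          calc stateDist τ ι π' t s ≤ ∑ x, stateDist τ ι π' t x :=
                Finset.single_le_sum (fun x _ => stateDist_nonneg hτ hι π' t x)
                  (Finset.mem_univ s)
            _ = 1 := stateDist_sum hτ hι π' t
        have hle := stateDist_le_of_le hτ hι (c := (1:ℝ)/2) (by norm_num)
          (fun x b => perturb_ge π₀ s a x b) t₀ s
        have hmid : 0 < ((1:ℝ)/2) ^ t₀ * stateDist τ ι π₀ t₀ s := by positivity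
        have h2 : 0 < stateDist τ ι π' t₀ s := lt_of_lt_of_le hmid hle
        have hterm : 0 < γ ^ t₀ * stateDist τ ι π' t₀ s := by positivity
        refine lt_of_lt_of_le hterm ?_
        exact Summable.le_tsum hsumm t₀ fun t _ =>
          mul_nonneg (pow_nonneg hγ0.le t) (stateDist_nonneg hτ hι π' t s)
      have h0 : ((D s a + γ * (∑ s', τ s a s' * V s') - V s) / 2)
          * (∑' t : ℕ, γ ^ t * stateDist τ ι π' t s) = 0 := by
        rw [← hZι]
        calc ∑ x, ι x * Vfun τ γ π' u x = ∑ x, ι x * W x := by rw [hWZ]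
          _ = 0 := hWι
      rcases mul_eq_zero.mp h0 with h | h
      · rw [div_eq_zero_iff] at h
        rcases h with h | h
        · exact h
        · norm_num at h
      · exact absurd h hCpos.ne'
    refine ⟨fun x => -V x, ?_, ?_⟩
    · dsimp only
      have hneg : ∑ s, ι s * (-V s) = -∑ s, ι s * V s := by
        rw [← Finset.sum_neg_distrib]
        exact Finset.sum_congr rfl fun s _ => by ring
      rw [hneg, hVι, neg_zero]
    · intro s a
      dsimp only
      have h := hAdv s a
      have hDsa : D s a = (∑ s', τ s a s' * R₂ s a s') - (∑ s', τ s a s' * R₁ s a s') := by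
        simp only [hD]
      have hsplit : ∑ s', τ s a s' * (R₁ s a s' + γ * (-V s'))
          = (∑ s', τ s a s' * R₁ s a s') - γ * ∑ s', τ s a s' * V s' := by
        rw [Finset.mul_sum, ← Finset.sum_sub_distrib]
        refine Finset.sum_congr rfl fun s' _ => by ring
      rw [hsplit]
      linarith
  · -- reverse direction
    rintro ⟨Φ, hΦι, hΦ⟩ π
    have hPΦ : ∀ s, (Pmat τ π *ᵥ Φ) s = ∑ a, π.1 s a * ∑ s', τ s a s' * Φ s' := by
      intro s
      show ∑ s', (∑ a, π.1 s a * τ s a s') * Φ s' = _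
      calc ∑ s', (∑ a, π.1 s a * τ s a s') * Φ s'
          = ∑ s', ∑ a, π.1 s a * (τ s a s' * Φ s') := by
            refine Finset.sum_congr rfl fun s' _ => ?_
            rw [Finset.sum_mul]
            exact Finset.sum_congr rfl fun a _ => by ring
        _ = ∑ a, ∑ s', π.1 s a * (τ s a s' * Φ s') := Finset.sum_comm
        _ = ∑ a, π.1 s a * ∑ s', τ s a s' * Φ s' := by
            refine Finset.sum_congr rfl fun a _ => by rw [Finset.mul_sum]
    have hr2 : ∀ s, rvec τ R₂ π s
        = rvec τ R₁ π s + (γ * (Pmat τ π *ᵥ Φ) s - Φ s) := by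
      intro s
      have hsum1 : ∑ a, π.1 s a = 1 := (π.2 s).2
      have key : ∀ a, ∑ s', τ s a s' * R₂ s a s'
          = (∑ s', τ s a s' * R₁ s a s') + γ * (∑ s', τ s a s' * Φ s') - Φ s := by
        intro a
        rw [hΦ s a]
        have hx : ∑ s', τ s a s' * (R₁ s a s' + γ * Φ s')
            = (∑ s', τ s a s' * R₁ s a s') + γ * ∑ s', τ s a s' * Φ s' := by
          rw [Finset.mul_sum, ← Finset.sum_add_distrib]
          refine Finset.sum_congr rfl fun s' _ => by ring
        rw [hx]
      unfold rvec
      calc ∑ a, π.1 s a * ∑ s', τ s a s' * R₂ s a s'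
          = ∑ a, (π.1 s a * ∑ s', τ s a s' * R₁ s a s'
              + (γ * (π.1 s a * ∑ s', τ s a s' * Φ s') - π.1 s a * Φ s)) := by
            refine Finset.sum_congr rfl fun a _ => ?_
            rw [key a]
            ring
        _ = (∑ a, π.1 s a * ∑ s', τ s a s' * R₁ s a s')
              + (γ * ∑ a, π.1 s a * ∑ s', τ s a s' * Φ s' - (∑ a, π.1 s a) * Φ s) := by
            rw [Finset.sum_add_distrib, Finset.sum_sub_distrib, ← Finset.mul_sum,
              ← Finset.sum_mul]
        _ = _ := by
            rw [hsum1, one_mul, hPΦ s]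
    set g : ℕ → ℝ := fun t => γ ^ t * ∑ x, stateDist τ ι π t x * Φ x with hg
    have hgsum : Summable g := summable_Jterm hτ hι hγ0.le hγ1 π Φ
    have hshift : ∀ t, ∑ x, stateDist τ ι π t x * (Pmat τ π *ᵥ Φ) x
        = ∑ x, stateDist τ ι π (t+1) x * Φ x := by
      intro t
      have h1 : stateDist τ ι π (t+1) = Matrix.vecMul (stateDist τ ι π t) (Pmat τ π) := by
        show Matrix.vecMul ι (Pmat τ π ^ (t+1)) = _
        rw [pow_succ, ← Matrix.vecMul_vecMul]
        rfl
      rw [h1]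
      exact Matrix.dotProduct_mulVec (stateDist τ ι π t) (Pmat τ π) Φ
    have hdiff : ∀ t, γ ^ t * (∑ x, stateDist τ ι π t x * rvec τ R₂ π x)
        - γ ^ t * (∑ x, stateDist τ ι π t x * rvec τ R₁ π x) = g (t+1) - g t := by
      intro t
      have hx : ∑ x, stateDist τ ι π t x * rvec τ R₂ π x
          = (∑ x, stateDist τ ι π t x * rvec τ R₁ π x)
            + (γ * ∑ x, stateDist τ ι π t x * (Pmat τ π *ᵥ Φ) x
              - ∑ x, stateDist τ ι π t x * Φ x) := by
        calc ∑ x, stateDist τ ι π t x * rvec τ R₂ π x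
            = ∑ x, (stateDist τ ι π t x * rvec τ R₁ π x
                + (γ * (stateDist τ ι π t x * (Pmat τ π *ᵥ Φ) x)
                  - stateDist τ ι π t x * Φ x)) := by
              refine Finset.sum_congr rfl fun x _ => ?_
              rw [hr2 x]
              ring
          _ = _ := by
              rw [Finset.sum_add_distrib, Finset.sum_sub_distrib, ← Finset.mul_sum]
      rw [hx, hshift t]
      simp only [hg]
      ring
    have h2 : Jval τ ι γ R₂ π - Jval τ ι γ R₁ π = ∑' t : ℕ, (g (t+1) - g t) := by
      unfold Jval
      rw [← Summable.tsum_sub (summable_Jterm hτ hι hγ0.le hγ1 π _)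
        (summable_Jterm hτ hι hγ0.le hγ1 π _)]
      exact tsum_congr hdiff
    have h4 : Summable fun t => g (t+1) := (summable_nat_add_iff 1).mpr hgsum
    have h3 : ∑' t : ℕ, (g (t+1) - g t) = - g 0 := by
      rw [Summable.tsum_sub h4 hgsum]
      have h5 := Summable.tsum_eq_zero_add hgsum
      linarith
    have hg0 : g 0 = 0 := by
      have hsd0 : stateDist τ ι π 0 = ι := by
        show Matrix.vecMul ι (Pmat τ π ^ 0) = ι
        rw [pow_zero, Matrix.vecMul_one]
      simp only [hg, pow_zero, one_mul, hsd0]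
      exact hΦι
    linarith [h2, h3, hg0]
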